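/- arXiv:1710.00674 — 13 statements merged into one kernel-verified Lean document; each statement's English description precedes it below -/
import Mathlib

section
/- Let U ⊆ ℝ³ be open, let f, g, h, P, Q, T : U → ℝ be continuously differentiable with T nonvanishing on U, and let I : U → ℝ be twice continuously differentiable with ∂I/∂x = −(Q·T)·g − (P·T)·h, ∂I/∂y = (Q·T)·f and ∂I/∂z = (P·T)·f on U. Then, writing D[F] = f·∂F/∂x + g·∂F/∂y + h·∂F/∂z, the identity f·P·D[T]/T = −f·D[P] − P·(f·∂f/∂x + g·∂f/∂y + f·∂h/∂z) − Q·(f·∂g/∂z − g·∂f/∂z) holds on U. -/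
/-- Partial derivative in the `x` direction of a function on `ℝ³`. -/
noncomputable def pdX (F : ℝ × ℝ × ℝ → ℝ) (p : ℝ × ℝ × ℝ) : ℝ :=
  fderiv ℝ F p (1, 0, 0)

/-- Partial derivative in the `y` direction. -/
noncomputable def pdY (F : ℝ × ℝ × ℝ → ℝ) (p : ℝ × ℝ × ℝ) : ℝ :=
  fderiv ℝ F p (0, 1, 0)

/-- Partial derivative in the `z` direction. -/
noncomputable def pdZ (F : ℝ × ℝ × ℝ → ℝ) (p : ℝ × ℝ × ℝ) : ℝ :=
  fderiv ℝ F p (0, 0, 1)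

/-- The Darboux operator `D = f·∂ₓ + g·∂ᵧ + h·∂_z` applied to `F`. -/
noncomputable def Dop (f g h F : ℝ × ℝ × ℝ → ℝ) (p : ℝ × ℝ × ℝ) : ℝ :=
  f p * pdX F p + g p * pdY F p + h p * pdZ F p

/-- Applied product rule. -/
lemma pd_mul (F G : ℝ × ℝ × ℝ → ℝ) (p v : ℝ × ℝ × ℝ)
    (hF : DifferentiableAt ℝ F p) (hG : DifferentiableAt ℝ G p) :
    fderiv ℝ (fun q => F q * G q) p v
      = fderiv ℝ F p v * G p + F p * fderiv ℝ G p v := by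
  rw [fderiv_fun_mul hF hG]
  simp [ContinuousLinearMap.add_apply, ContinuousLinearMap.smul_apply, smul_eq_mul]
  ring

/-- Symmetry of second partial derivatives for a C² function on an open set. -/
lemma second_symm {I : ℝ × ℝ × ℝ → ℝ} {U : Set (ℝ × ℝ × ℝ)} (hU : IsOpen U)
    (hI : ContDiffOn ℝ 2 I U) {p : ℝ × ℝ × ℝ} (hp : p ∈ U) (v w : ℝ × ℝ × ℝ) :
    fderiv ℝ (fun q => fderiv ℝ I q v) p w
      = fderiv ℝ (fun q => fderiv ℝ I q w) p v := by
  have hnp : U ∈ nhds p := hU.mem_nhds hp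
  have hIat : ContDiffAt ℝ 2 I p := hI.contDiffAt hnp
  have hderiv : ContDiffAt ℝ 1 (fderiv ℝ I) p := hIat.fderiv_right (le_refl 2)
  have hd : DifferentiableAt ℝ (fderiv ℝ I) p := hderiv.differentiableAt one_ne_zero
  have hev : ∀ᶠ y in nhds p, HasFDerivAt I (fderiv ℝ I y) y := by
    filter_upwards [hnp] with y hy
    exact ((hI.contDiffAt (hU.mem_nhds hy)).differentiableAt two_ne_zero).hasFDerivAt
  have hsymm := second_derivative_symmetric_of_eventually hev hd.hasFDerivAt v w
  have hv : HasFDerivAt (fun q => fderiv ℝ I q v)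
      ((ContinuousLinearMap.apply ℝ ℝ v).comp (fderiv ℝ (fderiv ℝ I) p)) p :=
    (ContinuousLinearMap.apply ℝ ℝ v).hasFDerivAt.comp p hd.hasFDerivAt
  have hw : HasFDerivAt (fun q => fderiv ℝ I q w)
      ((ContinuousLinearMap.apply ℝ ℝ w).comp (fderiv ℝ (fderiv ℝ I) p)) p :=
    (ContinuousLinearMap.apply ℝ ℝ w).hasFDerivAt.comp p hd.hasFDerivAt
  rw [hv.fderiv, hw.fderiv]
  simpa using hsymm.symm

/-- First compatibility identity (equation (PDr3)):
`f·P·D[T]/T = −f·D[P] − P·(f·f_x + g·f_y + f·h_z) − Q·(f·g_z − g·f_z)`. -/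
theorem compatibility_identity_P
    (U : Set (ℝ × ℝ × ℝ)) (hU : IsOpen U)
    (f g h P Q T I : ℝ × ℝ × ℝ → ℝ)
    (hf : ContDiffOn ℝ 1 f U) (hg : ContDiffOn ℝ 1 g U) (hh : ContDiffOn ℝ 1 h U)
    (hP : ContDiffOn ℝ 1 P U) (hQ : ContDiffOn ℝ 1 Q U) (hT : ContDiffOn ℝ 1 T U)
    (hTne : ∀ p ∈ U, T p ≠ 0)
    (hI : ContDiffOn ℝ 2 I U)
    (hIx : ∀ p ∈ U, pdX I p = -(Q p * T p) * g p - (P p * T p) * h p)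
    (hIy : ∀ p ∈ U, pdY I p = (Q p * T p) * f p)
    (hIz : ∀ p ∈ U, pdZ I p = (P p * T p) * f p) :
    ∀ p ∈ U,
      f p * P p * Dop f g h T p / T p =
        -(f p * Dop f g h P p)
          - P p * (f p * pdX f p + g p * pdY f p + f p * pdZ h p)
          - Q p * (f p * pdZ g p - g p * pdZ f p) := by
  intro p hp
  have hnp : U ∈ nhds p := hU.mem_nhds hp
  have df : DifferentiableAt ℝ f p := (hf.contDiffAt hnp).differentiableAt one_ne_zero
  have dg : DifferentiableAt ℝ g p := (hg.contDiffAt hnp).differentiableAt one_ne_zero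
  have dh : DifferentiableAt ℝ h p := (hh.contDiffAt hnp).differentiableAt one_ne_zero
  have dP : DifferentiableAt ℝ P p := (hP.contDiffAt hnp).differentiableAt one_ne_zero
  have dQ : DifferentiableAt ℝ Q p := (hQ.contDiffAt hnp).differentiableAt one_ne_zero
  have dT : DifferentiableAt ℝ T p := (hT.contDiffAt hnp).differentiableAt one_ne_zero
  -- notation for directions
  set ex : ℝ × ℝ × ℝ := (1, 0, 0)
  set ez : ℝ × ℝ × ℝ := (0, 0, 1)
  set ey : ℝ × ℝ × ℝ := (0, 1, 0)
  -- equation E1 : ∂z ∂x I = ∂x ∂z I, expanded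
  have hIxev : (fun q => fderiv ℝ I q ex) =ᶠ[nhds p]
      (fun q => -(Q q * T q * g q) - P q * T q * h q) := by
    filter_upwards [hnp] with q hq
    have := hIx q hq
    simp only [pdX] at this
    rw [this]; ring
  have hIzev : (fun q => fderiv ℝ I q ez) =ᶠ[nhds p]
      (fun q => P q * T q * f q) := by
    filter_upwards [hnp] with q hq
    have := hIz q hq
    simp only [pdZ] at this
    rw [this]
  have hIyev : (fun q => fderiv ℝ I q ey) =ᶠ[nhds p]
      (fun q => Q q * T q * f q) := by
    filter_upwards [hnp] with q hq
    have := hIy q hq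
    simp only [pdY] at this
    rw [this]
  -- expand ∂z of ∂x I
  have e1l : fderiv ℝ (fun q => fderiv ℝ I q ex) p ez
      = -((fderiv ℝ Q p ez * T p + Q p * fderiv ℝ T p ez) * g p
            + Q p * T p * fderiv ℝ g p ez)
        - ((fderiv ℝ P p ez * T p + P p * fderiv ℝ T p ez) * h p
            + P p * T p * fderiv ℝ h p ez) := by
    rw [hIxev.fderiv_eq]
    have d1 : DifferentiableAt ℝ (fun q => Q q * T q * g q) p := (dQ.mul dT).mul dg
    have d2 : DifferentiableAt ℝ (fun q => P q * T q * h q) p := (dP.mul dT).mul dh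
    have : fderiv ℝ (fun q => -(Q q * T q * g q) - P q * T q * h q) p
        = -(fderiv ℝ (fun q => Q q * T q * g q) p) - fderiv ℝ (fun q => P q * T q * h q) p := by
      rw [fderiv_fun_sub (f := fun q => -(Q q * T q * g q)) d1.neg d2, fderiv_fun_neg]
    rw [this]
    simp only [ContinuousLinearMap.sub_apply, ContinuousLinearMap.neg_apply]
    rw [pd_mul (fun q => Q q * T q) _ _ _ (dQ.mul dT) dg, pd_mul _ _ _ _ dQ dT,
        pd_mul (fun q => P q * T q) _ _ _ (dP.mul dT) dh, pd_mul _ _ _ _ dP dT]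
  -- expand ∂x of ∂z I and ∂y of ∂z I
  have e1r : fderiv ℝ (fun q => fderiv ℝ I q ez) p ex
      = (fderiv ℝ P p ex * T p + P p * fderiv ℝ T p ex) * f p
        + P p * T p * fderiv ℝ f p ex := by
    rw [hIzev.fderiv_eq]
    rw [pd_mul (fun q => P q * T q) _ _ _ (dP.mul dT) df, pd_mul _ _ _ _ dP dT]
  have e2r : fderiv ℝ (fun q => fderiv ℝ I q ez) p ey
      = (fderiv ℝ P p ey * T p + P p * fderiv ℝ T p ey) * f p
        + P p * T p * fderiv ℝ f p ey := by
    rw [hIzev.fderiv_eq]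
    rw [pd_mul (fun q => P q * T q) _ _ _ (dP.mul dT) df, pd_mul _ _ _ _ dP dT]
  have e2l : fderiv ℝ (fun q => fderiv ℝ I q ey) p ez
      = (fderiv ℝ Q p ez * T p + Q p * fderiv ℝ T p ez) * f p
        + Q p * T p * fderiv ℝ f p ez := by
    rw [hIyev.fderiv_eq]
    rw [pd_mul (fun q => Q q * T q) _ _ _ (dQ.mul dT) df, pd_mul _ _ _ _ dQ dT]
  have E1 : -((fderiv ℝ Q p ez * T p + Q p * fderiv ℝ T p ez) * g p
            + Q p * T p * fderiv ℝ g p ez)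
        - ((fderiv ℝ P p ez * T p + P p * fderiv ℝ T p ez) * h p
            + P p * T p * fderiv ℝ h p ez)
      = (fderiv ℝ P p ex * T p + P p * fderiv ℝ T p ex) * f p
        + P p * T p * fderiv ℝ f p ex := by
    rw [← e1l, ← e1r]
    exact second_symm hU hI hp ex ez
  have E2 : (fderiv ℝ Q p ez * T p + Q p * fderiv ℝ T p ez) * f p
        + Q p * T p * fderiv ℝ f p ez
      = (fderiv ℝ P p ey * T p + P p * fderiv ℝ T p ey) * f p
        + P p * T p * fderiv ℝ f p ey := by
    rw [← e2l, ← e2r]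
    exact second_symm hU hI hp ey ez
  have hT0 : T p ≠ 0 := hTne p hp
  simp only [Dop, pdX, pdY, pdZ]
  rw [div_eq_iff hT0]
  linear_combination (-(f p)) * E1 + (-(g p)) * E2
end

section
/- Let U ⊆ ℝ³ be open, let f, g, h, P, Q, T : U → ℝ be continuously differentiable with T nonvanishing on U, and let I : U → ℝ be twice continuously differentiable with ∂I/∂x = −(Q·T)·g − (P·T)·h, ∂I/∂y = (Q·T)·f and ∂I/∂z = (P·T)·f on U. Then, writing D[F] = f·∂F/∂x + g·∂F/∂y + h·∂F/∂z, the identity f·Q·D[T]/T = −f·D[Q] − Q·(f·∂f/∂x + f·∂g/∂y + h·∂f/∂z) − P·(f·∂h/∂y − h·∂f/∂y) holds on U. -/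
noncomputable def pdV (v : ℝ × ℝ × ℝ) (F : ℝ × ℝ × ℝ → ℝ) (p : ℝ × ℝ × ℝ) : ℝ :=
  fderiv ℝ F p v

lemma pdV_mul {v p : ℝ × ℝ × ℝ} {G H : ℝ × ℝ × ℝ → ℝ}
    (hG : DifferentiableAt ℝ G p) (hH : DifferentiableAt ℝ H p) :
    pdV v (fun q => G q * H q) p = pdV v G p * H p + G p * pdV v H p := by
  unfold pdV
  rw [fderiv_fun_mul hG hH]
  simp only [ContinuousLinearMap.add_apply, ContinuousLinearMap.smul_apply, smul_eq_mul]
  ring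

lemma pdV_sub {v p : ℝ × ℝ × ℝ} {G H : ℝ × ℝ × ℝ → ℝ}
    (hG : DifferentiableAt ℝ G p) (hH : DifferentiableAt ℝ H p) :
    pdV v (fun q => G q - H q) p = pdV v G p - pdV v H p := by
  unfold pdV
  rw [fderiv_fun_sub hG hH]; rfl

lemma pdV_neg {v p : ℝ × ℝ × ℝ} {G : ℝ × ℝ × ℝ → ℝ} :
    pdV v (fun q => -(G q)) p = -(pdV v G p) := by
  unfold pdV
  rw [fderiv_fun_neg]; rfl

lemma mixed_symm {U : Set (ℝ × ℝ × ℝ)} (hU : IsOpen U) {I : ℝ × ℝ × ℝ → ℝ}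
    (hI : ContDiffOn ℝ 2 I U) {p : ℝ × ℝ × ℝ} (hp : p ∈ U) (v w : ℝ × ℝ × ℝ) :
    pdV w (pdV v I) p = pdV v (pdV w I) p := by
  have hIp : ContDiffAt ℝ 2 I p := hI.contDiffAt (hU.mem_nhds hp)
  have hsym : IsSymmSndFDerivAt ℝ I p := hIp.isSymmSndFDerivAt (le_of_eq minSmoothness_of_isRCLikeNormedField)
  have hd2 : DifferentiableAt ℝ (fderiv ℝ I) p :=
    (hIp.fderiv_right (m := 1) (by norm_num)).differentiableAt one_ne_zero
  have key : ∀ u : ℝ × ℝ × ℝ, fderiv ℝ (fun q => fderiv ℝ I q u) p =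
      (fderiv ℝ (fderiv ℝ I) p).flip u := by
    intro u
    have := fderiv_clm_apply (𝕜 := ℝ) (c := fderiv ℝ I) (u := fun _ => u) hd2
      (differentiableAt_const u)
    simpa using this
  show fderiv ℝ (fun q => fderiv ℝ I q v) p w = fderiv ℝ (fun q => fderiv ℝ I q w) p v
  rw [key v, key w]
  exact hsym.eq w v

lemma pdV_congr {U : Set (ℝ × ℝ × ℝ)} (hU : IsOpen U) {G H : ℝ × ℝ × ℝ → ℝ}
    (hGH : ∀ q ∈ U, G q = H q) {p : ℝ × ℝ × ℝ} (hp : p ∈ U) (v : ℝ × ℝ × ℝ) :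
    pdV v G p = pdV v H p := by
  unfold pdV
  rw [Filter.EventuallyEq.fderiv_eq (Filter.eventually_of_mem (hU.mem_nhds hp) hGH)]

/-- Second compatibility identity (equation (QDr3)):
`f·Q·D[T]/T = −f·D[Q] − Q·(f·f_x + f·g_y + h·f_z) − P·(f·h_y − h·f_y)`. -/
theorem compatibility_identity_Q
    (U : Set (ℝ × ℝ × ℝ)) (hU : IsOpen U)
    (f g h P Q T I : ℝ × ℝ × ℝ → ℝ)
    (hf : ContDiffOn ℝ 1 f U) (hg : ContDiffOn ℝ 1 g U) (hh : ContDiffOn ℝ 1 h U)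
    (hP : ContDiffOn ℝ 1 P U) (hQ : ContDiffOn ℝ 1 Q U) (hT : ContDiffOn ℝ 1 T U)
    (hTne : ∀ p ∈ U, T p ≠ 0)
    (hI : ContDiffOn ℝ 2 I U)
    (hIx : ∀ p ∈ U, pdX I p = -(Q p * T p) * g p - (P p * T p) * h p)
    (hIy : ∀ p ∈ U, pdY I p = (Q p * T p) * f p)
    (hIz : ∀ p ∈ U, pdZ I p = (P p * T p) * f p) :
    ∀ p ∈ U,
      f p * Q p * Dop f g h T p / T p =
        -(f p * Dop f g h Q p)
          - Q p * (f p * pdX f p + f p * pdY g p + h p * pdZ f p)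
          - P p * (f p * pdY h p - h p * pdY f p) := by
  intro p hp
  have hnp := hU.mem_nhds hp
  have df : DifferentiableAt ℝ f p := (hf.contDiffAt hnp).differentiableAt one_ne_zero
  have dg : DifferentiableAt ℝ g p := (hg.contDiffAt hnp).differentiableAt one_ne_zero
  have dh : DifferentiableAt ℝ h p := (hh.contDiffAt hnp).differentiableAt one_ne_zero
  have dP : DifferentiableAt ℝ P p := (hP.contDiffAt hnp).differentiableAt one_ne_zero
  have dQ : DifferentiableAt ℝ Q p := (hQ.contDiffAt hnp).differentiableAt one_ne_zero
  have dT : DifferentiableAt ℝ T p := (hT.contDiffAt hnp).differentiableAt one_ne_zero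
  set e1 : ℝ × ℝ × ℝ := (1, 0, 0)
  set e2 : ℝ × ℝ × ℝ := (0, 1, 0)
  set e3 : ℝ × ℝ × ℝ := (0, 0, 1)
  have dQT : DifferentiableAt ℝ (fun q => Q q * T q) p := dQ.mul dT
  have dPT : DifferentiableAt ℝ (fun q => P q * T q) p := dP.mul dT
  have dQTg : DifferentiableAt ℝ (fun q => Q q * T q * g q) p := dQT.mul dg
  have dPTh : DifferentiableAt ℝ (fun q => P q * T q * h q) p := dPT.mul dh
  -- mixed partial x,y
  have hA : pdV e1 (fun q => Q q * T q * f q) p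
      = pdV e2 (fun q => -(Q q * T q * g q) - P q * T q * h q) p := by
    have h1 : pdV e1 (fun q => Q q * T q * f q) p = pdV e1 (pdY I) p :=
      (pdV_congr hU (fun q hq => (hIy q hq).symm) hp e1)
    have h2 : pdV e2 (pdX I) p
        = pdV e2 (fun q => -(Q q * T q * g q) - P q * T q * h q) p := by
      apply pdV_congr hU _ hp
      intro q hq
      rw [hIx q hq]; ring
    rw [h1, ← h2]
    exact mixed_symm hU hI hp e2 e1
  -- mixed partial z,y
  have hB : pdV e3 (fun q => Q q * T q * f q) p
      = pdV e2 (fun q => P q * T q * f q) p := by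
    have h1 : pdV e3 (fun q => Q q * T q * f q) p = pdV e3 (pdY I) p :=
      (pdV_congr hU (fun q hq => (hIy q hq).symm) hp e3)
    have h2 : pdV e2 (pdZ I) p = pdV e2 (fun q => P q * T q * f q) p :=
      pdV_congr hU (fun q hq => hIz q hq) hp e2
    rw [h1, ← h2]
    exact mixed_symm hU hI hp e2 e3
  -- expand products
  rw [pdV_mul dQT df, pdV_mul dQ dT,
    pdV_sub (G := fun q => -(Q q * T q * g q)) (dQTg.neg) dPTh, pdV_neg, pdV_mul dQT dg, pdV_mul dQ dT,
    pdV_mul dPT dh, pdV_mul dP dT] at hA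
  rw [pdV_mul dQT df, pdV_mul dQ dT, pdV_mul dPT df, pdV_mul dP dT] at hB
  have hT0 : T p ≠ 0 := hTne p hp
  have hgoal : pdX f p = pdV e1 f p := rfl
  simp only [Dop]
  have ex : ∀ F : ℝ × ℝ × ℝ → ℝ, pdX F p = pdV e1 F p := fun _ => rfl
  have ey : ∀ F : ℝ × ℝ × ℝ → ℝ, pdY F p = pdV e2 F p := fun _ => rfl
  have ez : ∀ F : ℝ × ℝ × ℝ → ℝ, pdZ F p = pdV e3 F p := fun _ => rfl
  rw [ex T, ey T, ez T, ex Q, ey Q, ez Q, ex f, ey g, ez f, ey h, ey f]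
  field_simp
  linear_combination f p * hA + h p * hB
end

section
/- Let U ⊆ ℝ³ be open, let f, g, h : U → ℝ be continuously differentiable with f nonvanishing on U, and let I : U → ℝ be twice continuously differentiable with f·∂I/∂x + g·∂I/∂y + h·∂I/∂z = 0 on U and ∂I/∂z nonvanishing on U. Define the S-function S := (∂I/∂y)/(∂I/∂z). Then on U: f·∂S/∂x + g·∂S/∂y + h·∂S/∂z = S²·(f·∂g/∂z − g·∂f/∂z)/f + S·(g·∂f/∂y + f·∂h/∂z − f·∂g/∂y − h·∂f/∂z)/f − (f·∂h/∂y − h·∂f/∂y)/f. -/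
open Topology


/-- The S-function associated with a first integral `I`: `S = (∂I/∂y)/(∂I/∂z)`. -/
noncomputable def Sfun (I : ℝ × ℝ × ℝ → ℝ) (p : ℝ × ℝ × ℝ) : ℝ :=
  pdY I p / pdZ I p

lemma Salg (fp gp hp fy fz gy gz hy hz Jx Jy Jz Bxy Byy Byz Bxz Bzz : ℝ)
    (hfp : fp ≠ 0) (hJz : Jz ≠ 0)
    (e1 : fp*Jx + gp*Jy + hp*Jz = 0)
    (e2y : fp*Bxy + Jx*fy + gp*Byy + Jy*gy + hp*Byz + Jz*hy = 0)
    (e2z : fp*Bxz + Jx*fz + gp*Byz + Jy*gz + hp*Bzz + Jz*hz = 0) :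
    fp*((1/Jz)*Bxy - (Jy/Jz^2)*Bxz) + gp*((1/Jz)*Byy - (Jy/Jz^2)*Byz)
      + hp*((1/Jz)*Byz - (Jy/Jz^2)*Bzz)
    = (Jy/Jz)^2*(fp*gz - gp*fz)/fp + (Jy/Jz)*(gp*fy + fp*hz - fp*gy - hp*fz)/fp
      - (fp*hy - hp*fy)/fp := by
  field_simp
  linear_combination (fp*Jz)*e2y - (fp*Jy)*e2z + (fz*Jy - fy*Jz)*e1

/-- The S-function of a first integral satisfies the Riccati-type equation
`D[S] = S²·(f·g_z − g·f_z)/f + S·(g·f_y + f·h_z − f·g_y − h·f_z)/f − (f·h_y − h·f_y)/f`. -/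
theorem S_function_riccati_equation
    (U : Set (ℝ × ℝ × ℝ)) (hU : IsOpen U)
    (f g h I : ℝ × ℝ × ℝ → ℝ)
    (hf : ContDiffOn ℝ 1 f U) (hg : ContDiffOn ℝ 1 g U) (hh : ContDiffOn ℝ 1 h U)
    (hfne : ∀ p ∈ U, f p ≠ 0)
    (hI : ContDiffOn ℝ 2 I U)
    (hinv : ∀ p ∈ U, f p * pdX I p + g p * pdY I p + h p * pdZ I p = 0)
    (hIz : ∀ p ∈ U, pdZ I p ≠ 0) :
    ∀ p ∈ U,
      f p * pdX (Sfun I) p + g p * pdY (Sfun I) p + h p * pdZ (Sfun I) p =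
        (Sfun I p) ^ 2 * (f p * pdZ g p - g p * pdZ f p) / f p
          + Sfun I p *
            (g p * pdY f p + f p * pdZ h p - f p * pdY g p - h p * pdZ f p) / f p
          - (f p * pdY h p - h p * pdY f p) / f p := by
  intro p hp
  have hmem : U ∈ 𝓝 p := hU.mem_nhds hp
  have hIp : ContDiffAt ℝ 2 I p := hI.contDiffAt hmem
  have hfd : DifferentiableAt ℝ f p := (hf.contDiffAt hmem).differentiableAt one_ne_zero
  have hgd : DifferentiableAt ℝ g p := (hg.contDiffAt hmem).differentiableAt one_ne_zero
  have hhd : DifferentiableAt ℝ h p := (hh.contDiffAt hmem).differentiableAt one_ne_zero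
  have hI'd : DifferentiableAt ℝ (fderiv ℝ I) p :=
    (hIp.fderiv_right (le_refl 2)).differentiableAt one_ne_zero
  set B := fderiv ℝ (fderiv ℝ I) p with hBdef
  -- derivative of directional-derivative functions
  have hpd : ∀ v : ℝ × ℝ × ℝ, HasFDerivAt (fun q => fderiv ℝ I q v) (B.flip v) p := by
    intro v
    have h1 := hI'd.hasFDerivAt.clm_apply (hasFDerivAt_const v p)
    simpa using h1
  -- symmetry of second derivatives
  have hsymm : ∀ v w : ℝ × ℝ × ℝ, B v w = B w v :=
    fun v w => (hIp.isSymmSndFDerivAt (by simp)) v w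
  -- derivative of the invariance identity
  have hF : HasFDerivAt
      (fun q => f q * fderiv ℝ I q (1,0,0) + g q * fderiv ℝ I q (0,1,0)
        + h q * fderiv ℝ I q (0,0,1))
      ((f p • B.flip (1,0,0) + fderiv ℝ I p (1,0,0) • fderiv ℝ f p)
        + (g p • B.flip (0,1,0) + fderiv ℝ I p (0,1,0) • fderiv ℝ g p)
        + (h p • B.flip (0,0,1) + fderiv ℝ I p (0,0,1) • fderiv ℝ h p)) p :=
    ((hfd.hasFDerivAt.mul (hpd _)).add (hgd.hasFDerivAt.mul (hpd _))).add
      (hhd.hasFDerivAt.mul (hpd _))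
  have heq : (fun q => f q * fderiv ℝ I q (1,0,0) + g q * fderiv ℝ I q (0,1,0)
      + h q * fderiv ℝ I q (0,0,1)) =ᶠ[𝓝 p] (fun _ => (0:ℝ)) := by
    filter_upwards [hmem] with q hq
    exact hinv q hq
  have hF0 : ((f p • B.flip (1,0,0) + fderiv ℝ I p (1,0,0) • fderiv ℝ f p)
        + (g p • B.flip (0,1,0) + fderiv ℝ I p (0,1,0) • fderiv ℝ g p)
        + (h p • B.flip (0,0,1) + fderiv ℝ I p (0,0,1) • fderiv ℝ h p)) = 0 := by
    rw [← hF.fderiv, heq.fderiv_eq]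
    exact fderiv_const_apply 0
  have e2 : ∀ w : ℝ × ℝ × ℝ,
      f p * B w (1,0,0) + fderiv ℝ I p (1,0,0) * fderiv ℝ f p w
        + g p * B w (0,1,0) + fderiv ℝ I p (0,1,0) * fderiv ℝ g p w
        + h p * B w (0,0,1) + fderiv ℝ I p (0,0,1) * fderiv ℝ h p w = 0 := by
    intro w
    have := congrArg (fun (L : (ℝ × ℝ × ℝ) →L[ℝ] ℝ) => L w) hF0
    simp only [ContinuousLinearMap.add_apply, ContinuousLinearMap.smul_apply,
      ContinuousLinearMap.flip_apply, smul_eq_mul, ContinuousLinearMap.zero_apply] at this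
    linarith
  -- derivative of the S-function
  have hz : fderiv ℝ I p (0,0,1) ≠ 0 := hIz p hp
  have hS : HasFDerivAt (Sfun I)
      ((1 / fderiv ℝ I p (0,0,1)) • B.flip (0,1,0)
        - (fderiv ℝ I p (0,1,0) / fderiv ℝ I p (0,0,1) ^ 2) • B.flip (0,0,1)) p := by
    have h1 := (hasDerivAt_inv hz).comp_hasFDerivAt p (hpd (0,0,1))
    have h2 := (hpd (0,1,0)).mul h1
    have hfun : Sfun I = fun q => fderiv ℝ I q (0,1,0)
        * ((fun y => y⁻¹) ∘ fun q => fderiv ℝ I q (0,0,1)) q := by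
      funext q
      simp [Sfun, pdY, pdZ, div_eq_mul_inv]
    rw [hfun]
    refine h2.congr_fderiv ?_
    · refine ContinuousLinearMap.ext fun w => ?_
      simp only [ContinuousLinearMap.sub_apply, ContinuousLinearMap.add_apply,
        ContinuousLinearMap.smul_apply, smul_eq_mul, Function.comp_apply]
      field_simp
      ring
  have hSd := hS.fderiv
  have hX : pdX (Sfun I) p = (1 / fderiv ℝ I p (0,0,1)) * B (1,0,0) (0,1,0)
      - (fderiv ℝ I p (0,1,0) / fderiv ℝ I p (0,0,1) ^ 2) * B (1,0,0) (0,0,1) := by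
    simp [pdX, hSd]
  have hY : pdY (Sfun I) p = (1 / fderiv ℝ I p (0,0,1)) * B (0,1,0) (0,1,0)
      - (fderiv ℝ I p (0,1,0) / fderiv ℝ I p (0,0,1) ^ 2) * B (0,1,0) (0,0,1) := by
    simp [pdY, hSd]
  have hZ : pdZ (Sfun I) p = (1 / fderiv ℝ I p (0,0,1)) * B (0,0,1) (0,1,0)
      - (fderiv ℝ I p (0,1,0) / fderiv ℝ I p (0,0,1) ^ 2) * B (0,0,1) (0,0,1) := by
    simp [pdZ, hSd]
  rw [hX, hY, hZ]
  simp only [Sfun, pdX, pdY, pdZ]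
  have e1 : f p * fderiv ℝ I p (1,0,0) + g p * fderiv ℝ I p (0,1,0)
      + h p * fderiv ℝ I p (0,0,1) = 0 := hinv p hp
  have e2y := e2 (0,1,0)
  have e2z := e2 (0,0,1)
  rw [hsymm (0,1,0) (1,0,0)] at e2y
  rw [hsymm (0,0,1) (1,0,0), hsymm (0,0,1) (0,1,0)] at e2z
  rw [hsymm (0,0,1) (0,1,0)]
  have halg := Salg (f p) (g p) (h p)
    (fderiv ℝ f p (0,1,0)) (fderiv ℝ f p (0,0,1))
    (fderiv ℝ g p (0,1,0)) (fderiv ℝ g p (0,0,1))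
    (fderiv ℝ h p (0,1,0)) (fderiv ℝ h p (0,0,1))
    (fderiv ℝ I p (1,0,0)) (fderiv ℝ I p (0,1,0)) (fderiv ℝ I p (0,0,1))
    (B (1,0,0) (0,1,0)) (B (0,1,0) (0,1,0)) (B (0,1,0) (0,0,1))
    (B (1,0,0) (0,0,1)) (B (0,0,1) (0,0,1))
    (hfne p hp) hz (by linear_combination e1) (by linear_combination e2y)
    (by linear_combination e2z)
  linear_combination halg
end

section
/- Let M, N : ℝ³ → ℝ be continuous, let φ : ℝ → ℝ be differentiable, and let I : ℝ³ → ℝ be differentiable such that for all (x, y) ∈ ℝ²: N(x,y,φ(x))·∂I/∂x(x,y,φ(x)) + M(x,y,φ(x))·∂I/∂y(x,y,φ(x)) + N(x,y,φ(x))·φ'(x)·∂I/∂z(x,y,φ(x)) = 0. If J ⊆ ℝ is an interval and y : J → ℝ is differentiable with N(x, y(x), φ(x)) ≠ 0 and y'(x) = M(x, y(x), φ(x))/N(x, y(x), φ(x)) for all x ∈ J, then the function x ↦ I(x, y(x), φ(x)) is constant on J. -/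
/-- A first integral of the 3D system associated with the 1ODE
`dy/dx = M(x, y, φ(x))/N(x, y, φ(x))` is a differential invariant of the 1ODE:
it is constant along solutions. -/
theorem invariant_of_1ode_with_function_of_x
    (M N : ℝ × ℝ × ℝ → ℝ) (hM : Continuous M) (hN : Continuous N)
    (φ : ℝ → ℝ) (hφ : Differentiable ℝ φ)
    (I : ℝ × ℝ × ℝ → ℝ) (hI : Differentiable ℝ I)
    (hpde : ∀ x y : ℝ,
      N (x, y, φ x) * pdX I (x, y, φ x) + M (x, y, φ x) * pdY I (x, y, φ x)
        + N (x, y, φ x) * deriv φ x * pdZ I (x, y, φ x) = 0)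
    (J : Set ℝ) (hJ : J.OrdConnected) (y : ℝ → ℝ)
    (hNne : ∀ x ∈ J, N (x, y x, φ x) ≠ 0)
    (hy : ∀ x ∈ J, HasDerivAt y (M (x, y x, φ x) / N (x, y x, φ x)) x) :
    ∀ a ∈ J, ∀ b ∈ J, I (a, y a, φ a) = I (b, y b, φ b) := by
  intro a ha b hb
  set g : ℝ → ℝ := fun x => I (x, y x, φ x) with hg
  have hder : ∀ x ∈ J, HasDerivAt g 0 x := by
    intro x hx
    have hcurve : HasDerivAt (fun t => ((t, y t, φ t) : ℝ × ℝ × ℝ))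
        (1, M (x, y x, φ x) / N (x, y x, φ x), deriv φ x) x :=
      HasDerivAt.prodMk (hasDerivAt_id x) (HasDerivAt.prodMk ((hy x hx)) (hφ x).hasDerivAt)
    have hcomp := (hI (x, y x, φ x)).hasFDerivAt.comp_hasDerivAt x hcurve
    have hlin : fderiv ℝ I (x, y x, φ x)
        (1, M (x, y x, φ x) / N (x, y x, φ x), deriv φ x) = 0 := by
      have hdecomp : ((1, M (x, y x, φ x) / N (x, y x, φ x), deriv φ x) : ℝ × ℝ × ℝ)
          = (1, 0, 0) + (M (x, y x, φ x) / N (x, y x, φ x)) • (0, 1, 0)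
            + (deriv φ x) • (0, 0, 1) := by
        simp [Prod.ext_iff]
      rw [hdecomp, map_add, map_add, map_smul, map_smul]
      have h0 := hpde x (y x)
      have hne := hNne x hx
      have : pdX I (x, y x, φ x) + (M (x, y x, φ x) / N (x, y x, φ x)) * pdY I (x, y x, φ x)
          + deriv φ x * pdZ I (x, y x, φ x) = 0 := by
        field_simp
        linarith [h0]
      simpa [pdX, pdY, pdZ, smul_eq_mul] using this
    rw [hlin] at hcomp
    exact hcomp
  have hconv : Convex ℝ J := hJ.convex
  have := hconv.norm_image_sub_le_of_norm_hasDerivWithin_le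
    (C := 0) (f' := fun _ => (0 : ℝ)) (fun x hx => (hder x hx).hasDerivWithinAt)
    (fun x hx => by simp) ha hb
  have : ‖g b - g a‖ ≤ 0 := by simpa using this
  have : g b = g a := by
    have := norm_le_zero_iff.mp this
    linarith [sub_eq_zero.mp this]
  exact this.symm
end

section
/- Let M, N : ℝ³ → ℝ be continuous, let φ : ℝ² → ℝ be differentiable, and let I : ℝ³ → ℝ be differentiable such that for all (x, y) ∈ ℝ², writing u = φ(x,y): N(x,y,u)·∂I/∂x(x,y,u) + M(x,y,u)·∂I/∂y(x,y,u) + (N(x,y,u)·∂φ/∂x(x,y) + M(x,y,u)·∂φ/∂y(x,y))·∂I/∂z(x,y,u) = 0. If J ⊆ ℝ is an interval and y : J → ℝ is differentiable with N(x, y(x), φ(x,y(x))) ≠ 0 and y'(x) = M(x, y(x), φ(x,y(x)))/N(x, y(x), φ(x,y(x))) for all x ∈ J, then the function x ↦ I(x, y(x), φ(x, y(x))) is constant on J. -/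
/-- Partial derivative in the first direction of a function on `ℝ²`. -/
noncomputable def pdX2 (F : ℝ × ℝ → ℝ) (q : ℝ × ℝ) : ℝ :=
  fderiv ℝ F q (1, 0)

/-- Partial derivative in the second direction of a function on `ℝ²`. -/
noncomputable def pdY2 (F : ℝ × ℝ → ℝ) (q : ℝ × ℝ) : ℝ :=
  fderiv ℝ F q (0, 1)

/-- A first integral of the 3D system associated with the 1ODE
`dy/dx = M(x, y, φ(x,y))/N(x, y, φ(x,y))`, with `φ` a function of both `x` and `y`,
is a differential invariant of the 1ODE: it is constant along solutions. -/
theorem invariant_of_1ode_with_function_of_x_and_y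
    (M N : ℝ × ℝ × ℝ → ℝ) (hM : Continuous M) (hN : Continuous N)
    (φ : ℝ × ℝ → ℝ) (hφ : Differentiable ℝ φ)
    (I : ℝ × ℝ × ℝ → ℝ) (hI : Differentiable ℝ I)
    (hpde : ∀ x y : ℝ,
      N (x, y, φ (x, y)) * pdX I (x, y, φ (x, y))
        + M (x, y, φ (x, y)) * pdY I (x, y, φ (x, y))
        + (N (x, y, φ (x, y)) * pdX2 φ (x, y) + M (x, y, φ (x, y)) * pdY2 φ (x, y))
            * pdZ I (x, y, φ (x, y)) = 0)
    (J : Set ℝ) (hJ : J.OrdConnected) (y : ℝ → ℝ)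
    (hNne : ∀ x ∈ J, N (x, y x, φ (x, y x)) ≠ 0)
    (hy : ∀ x ∈ J,
      HasDerivAt y (M (x, y x, φ (x, y x)) / N (x, y x, φ (x, y x))) x) :
    ∀ a ∈ J, ∀ b ∈ J, I (a, y a, φ (a, y a)) = I (b, y b, φ (b, y b)) := by

  -- main derivative fact
  have key : ∀ x ∈ J, HasDerivAt (fun t => I (t, y t, φ (t, y t))) 0 x := by
    intro x hx
    set c := M (x, y x, φ (x, y x)) / N (x, y x, φ (x, y x)) with hc
    have hyx := hy x hx
    have hpair : HasDerivAt (fun t => (t, y t)) (1, c) x :=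
      (hasDerivAt_id x).prodMk hyx
    have hφx : HasDerivAt (fun t => φ (t, y t))
        (fderiv ℝ φ (x, y x) (1, c)) x :=
      (hφ (x, y x)).hasFDerivAt.comp_hasDerivAt x hpair
    set d := fderiv ℝ φ (x, y x) (1, c) with hd
    have hdval : d = pdX2 φ (x, y x) + c * pdY2 φ (x, y x) := by
      have : (1, c) = (1, 0) + c • ((0 : ℝ), (1 : ℝ)) := by
        simp [Prod.ext_iff]
      rw [hd, this, map_add, map_smul]
      simp [pdX2, pdY2, smul_eq_mul]
    have htrip : HasDerivAt (fun t => ((t, y t, φ (t, y t)) : ℝ × ℝ × ℝ))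
        (1, c, d) x :=
      (hasDerivAt_id x).prodMk (hyx.prodMk hφx)
    have hIx : HasDerivAt (fun t => I (t, y t, φ (t, y t)))
        (fderiv ℝ I (x, y x, φ (x, y x)) (1, c, d)) x :=
      (hI (x, y x, φ (x, y x))).hasFDerivAt.comp_hasDerivAt x htrip
    have hIval : fderiv ℝ I (x, y x, φ (x, y x)) (1, c, d)
        = pdX I (x, y x, φ (x, y x)) + c * pdY I (x, y x, φ (x, y x))
          + d * pdZ I (x, y x, φ (x, y x)) := by
      have : ((1 : ℝ), c, d) = (1, 0, 0) + c • ((0:ℝ), (1:ℝ), (0:ℝ))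
          + d • ((0:ℝ), (0:ℝ), (1:ℝ)) := by
        simp [Prod.ext_iff]
      rw [this, map_add, map_add, map_smul, map_smul]
      simp [pdX, pdY, pdZ, smul_eq_mul]
    have hNx := hNne x hx
    have hzero : fderiv ℝ I (x, y x, φ (x, y x)) (1, c, d) = 0 := by
      rw [hIval, hdval, hc]
      have h := hpde x (y x)
      field_simp
      linarith [h]
    rw [hzero] at hIx
    exact hIx
  intro a ha b hb
  rcases le_total a b with hab | hab
  · have hsub : Set.Icc a b ⊆ J := hJ.out ha hb
    have := constant_of_has_deriv_right_zero
      (f := fun t => I (t, y t, φ (t, y t))) (a := a) (b := b)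
      (fun t ht => ((key t (hsub ht)).continuousAt).continuousWithinAt)
      (fun t ht => ((key t (hsub (Set.Ico_subset_Icc_self ht))).hasDerivWithinAt))
      b (Set.right_mem_Icc.mpr hab)
    exact this.symm
  · have hsub : Set.Icc b a ⊆ J := hJ.out hb ha
    have := constant_of_has_deriv_right_zero
      (f := fun t => I (t, y t, φ (t, y t))) (a := b) (b := a)
      (fun t ht => ((key t (hsub ht)).continuousAt).continuousWithinAt)
      (fun t ht => ((key t (hsub (Set.Ico_subset_Icc_self ht))).hasDerivWithinAt))
      a (Set.right_mem_Icc.mpr hab)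
    exact this
end

section
/- Let p₁, p₂ be real polynomials in one variable, let M, N : ℝ³ → ℝ be continuous, and set φ(x) = exp(p₁(x)/p₂(x)) for p₂(x) ≠ 0. Let I : ℝ³ → ℝ be differentiable such that for all (x, y) with p₂(x) ≠ 0, writing u = φ(x): p₂(x)²·N(x,y,u)·∂I/∂x(x,y,u) + p₂(x)²·M(x,y,u)·∂I/∂y(x,y,u) + N(x,y,u)·(p₁'(x)·p₂(x) − p₁(x)·p₂'(x))·u·∂I/∂z(x,y,u) = 0. If J ⊆ ℝ is an interval and y : J → ℝ is differentiable with p₂(x) ≠ 0, N(x, y(x), φ(x)) ≠ 0 and y'(x) = M(x, y(x), φ(x))/N(x, y(x), φ(x)) for all x ∈ J, then x ↦ I(x, y(x), exp(p₁(x)/p₂(x))) is constant on J. -/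
/-- A first integral of the polynomial 3D system (with numerator and denominator
redefined by the factor `p₂²`) associated with the 1ODE
`dy/dx = M(x, y, u)/N(x, y, u)` presenting `u = exp(p₁(x)/p₂(x))`
is constant along solutions of the 1ODE. -/
theorem invariant_of_1ode_with_exp_of_rational
    (p₁ p₂ : Polynomial ℝ)
    (M N : ℝ × ℝ × ℝ → ℝ) (hM : Continuous M) (hN : Continuous N)
    (I : ℝ × ℝ × ℝ → ℝ) (hI : Differentiable ℝ I)
    (hpde : ∀ x y : ℝ, p₂.eval x ≠ 0 →
      ∀ u : ℝ, u = Real.exp (p₁.eval x / p₂.eval x) →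
        (p₂.eval x) ^ 2 * N (x, y, u) * pdX I (x, y, u)
          + (p₂.eval x) ^ 2 * M (x, y, u) * pdY I (x, y, u)
          + N (x, y, u)
              * ((Polynomial.derivative p₁).eval x * p₂.eval x
                  - p₁.eval x * (Polynomial.derivative p₂).eval x)
              * u * pdZ I (x, y, u) = 0)
    (J : Set ℝ) (hJ : J.OrdConnected) (y : ℝ → ℝ)
    (hp₂ : ∀ x ∈ J, p₂.eval x ≠ 0)
    (hNne : ∀ x ∈ J, N (x, y x, Real.exp (p₁.eval x / p₂.eval x)) ≠ 0)
    (hy : ∀ x ∈ J,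
      HasDerivAt y
        (M (x, y x, Real.exp (p₁.eval x / p₂.eval x))
          / N (x, y x, Real.exp (p₁.eval x / p₂.eval x))) x) :
    ∀ a ∈ J, ∀ b ∈ J,
      I (a, y a, Real.exp (p₁.eval a / p₂.eval a))
        = I (b, y b, Real.exp (p₁.eval b / p₂.eval b)) := by
  set φ : ℝ → ℝ := fun x => Real.exp (p₁.eval x / p₂.eval x) with hφdef
  have key : ∀ x ∈ J, HasDerivAt (fun x => I (x, y x, φ x)) 0 x := by
    intro x hx
    have hp2 := hp₂ x hx
    have hNx := hNne x hx
    have hq : HasDerivAt (fun x => p₁.eval x / p₂.eval x)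
        (((Polynomial.derivative p₁).eval x * p₂.eval x
          - p₁.eval x * (Polynomial.derivative p₂).eval x) / (p₂.eval x) ^ 2) x :=
      (p₁.hasDerivAt x).div (p₂.hasDerivAt x) hp2
    have hφ' : HasDerivAt φ
        (φ x * (((Polynomial.derivative p₁).eval x * p₂.eval x
          - p₁.eval x * (Polynomial.derivative p₂).eval x) / (p₂.eval x) ^ 2)) x := hq.exp
    have hc : HasDerivAt (fun x => ((x, y x, φ x) : ℝ × ℝ × ℝ))
        (1, M (x, y x, φ x) / N (x, y x, φ x),
          φ x * (((Polynomial.derivative p₁).eval x * p₂.eval x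
          - p₁.eval x * (Polynomial.derivative p₂).eval x) / (p₂.eval x) ^ 2)) x :=
      (hasDerivAt_id x).prodMk ((hy x hx).prodMk hφ')
    have hcomp := (hI (x, y x, φ x)).hasFDerivAt.comp_hasDerivAt x hc
    convert hcomp using 1
    iterate 3 rfl
    have hsplit : ((1:ℝ), M (x, y x, φ x) / N (x, y x, φ x),
          φ x * (((Polynomial.derivative p₁).eval x * p₂.eval x
          - p₁.eval x * (Polynomial.derivative p₂).eval x) / (p₂.eval x) ^ 2))
        = ((1:ℝ),(0:ℝ),(0:ℝ)) + (M (x, y x, φ x) / N (x, y x, φ x)) • ((0:ℝ),(1:ℝ),(0:ℝ))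
          + (φ x * (((Polynomial.derivative p₁).eval x * p₂.eval x
          - p₁.eval x * (Polynomial.derivative p₂).eval x) / (p₂.eval x) ^ 2)) • ((0:ℝ),(0:ℝ),(1:ℝ)) := by
      simp [Prod.ext_iff]
    rw [hsplit, map_add, map_add, map_smul, map_smul]
    have hpde' := hpde x (y x) hp2 (φ x) rfl
    simp only [smul_eq_mul]
    show (0:ℝ) = pdX I (x, y x, φ x) + _ * pdY I (x, y x, φ x) + _ * pdZ I (x, y x, φ x)
    field_simp
    have hNx' : N (x, y x, φ x) ≠ 0 := hNx
    apply mul_left_cancel₀ hNx'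
    rw [zero_mul, mul_zero, ← hpde']
    field_simp
  intro a ha b hb
  have hconv : Convex ℝ J := hJ.convex
  have hb2 := Convex.norm_image_sub_le_of_norm_hasDerivWithin_le (C := 0)
    (f' := fun _ => (0:ℝ)) (fun x hx => (key x hx).hasDerivWithinAt)
    (fun x hx => by simp) hconv hb ha
  simp only [norm_zero, zero_mul] at hb2
  have := norm_le_zero_iff.mp hb2
  exact sub_eq_zero.mp this
end

section
/- Let p₃, p₄ be real polynomials in one variable, let M, N : ℝ³ → ℝ be continuous, and set φ(x) = ln(p₃(x)/p₄(x)) for p₃(x)/p₄(x) > 0. Let I : ℝ³ → ℝ be differentiable such that for all (x, y) with p₃(x)/p₄(x) > 0, writing u = φ(x): p₃(x)·p₄(x)·N(x,y,u)·∂I/∂x(x,y,u) + p₃(x)·p₄(x)·M(x,y,u)·∂I/∂y(x,y,u) + N(x,y,u)·(p₃'(x)·p₄(x) − p₃(x)·p₄'(x))·∂I/∂z(x,y,u) = 0. If J ⊆ ℝ is an interval and y : J → ℝ is differentiable with p₃(x)/p₄(x) > 0, p₃(x)·p₄(x) ≠ 0, N(x, y(x), φ(x)) ≠ 0 and y'(x)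 = M(x, y(x), φ(x))/N(x, y(x), φ(x)) for all x ∈ J, then x ↦ I(x, y(x), ln(p₃(x)/p₄(x))) is constant on J. -/
/-- A first integral of the polynomial 3D system (with numerator and denominator
redefined by the factor `p₃·p₄`) associated with the 1ODE
`dy/dx = M(x, y, u)/N(x, y, u)` presenting `u = ln(p₃(x)/p₄(x))`
is constant along solutions of the 1ODE. -/
theorem invariant_of_1ode_with_log_of_rational
    (p₃ p₄ : Polynomial ℝ)
    (M N : ℝ × ℝ × ℝ → ℝ) (hM : Continuous M) (hN : Continuous N)
    (I : ℝ × ℝ × ℝ → ℝ) (hI : Differentiable ℝ I)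
    (hpde : ∀ x y : ℝ, 0 < p₃.eval x / p₄.eval x →
      ∀ u : ℝ, u = Real.log (p₃.eval x / p₄.eval x) →
        p₃.eval x * p₄.eval x * N (x, y, u) * pdX I (x, y, u)
          + p₃.eval x * p₄.eval x * M (x, y, u) * pdY I (x, y, u)
          + N (x, y, u)
              * ((Polynomial.derivative p₃).eval x * p₄.eval x
                  - p₃.eval x * (Polynomial.derivative p₄).eval x)
              * pdZ I (x, y, u) = 0)
    (J : Set ℝ) (hJ : J.OrdConnected) (y : ℝ → ℝ)
    (hpos : ∀ x ∈ J, 0 < p₃.eval x / p₄.eval x)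
    (hne : ∀ x ∈ J, p₃.eval x * p₄.eval x ≠ 0)
    (hNne : ∀ x ∈ J, N (x, y x, Real.log (p₃.eval x / p₄.eval x)) ≠ 0)
    (hy : ∀ x ∈ J,
      HasDerivAt y
        (M (x, y x, Real.log (p₃.eval x / p₄.eval x))
          / N (x, y x, Real.log (p₃.eval x / p₄.eval x))) x) :
    ∀ a ∈ J, ∀ b ∈ J,
      I (a, y a, Real.log (p₃.eval a / p₄.eval a))
        = I (b, y b, Real.log (p₃.eval b / p₄.eval b)) := by
  intro a ha b hb
  set F : ℝ → ℝ := fun x => I (x, y x, Real.log (p₃.eval x / p₄.eval x)) with hF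
  have key : ∀ x ∈ J, HasDerivAt F 0 x := by
    intro x hx
    have hp3 : p₃.eval x ≠ 0 := fun h => hne x hx (by rw [h]; ring)
    have hp4 : p₄.eval x ≠ 0 := fun h => hne x hx (by rw [h]; ring)
    have hratio : p₃.eval x / p₄.eval x ≠ 0 := div_ne_zero hp3 hp4
    -- derivative of u = log (p₃/p₄)
    have hdiv : HasDerivAt (fun t => p₃.eval t / p₄.eval t)
        (((Polynomial.derivative p₃).eval x * p₄.eval x
          - p₃.eval x * (Polynomial.derivative p₄).eval x) / (p₄.eval x) ^ 2) x :=
      (p₃.hasDerivAt x).div (p₄.hasDerivAt x) hp4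
    have hu : HasDerivAt (fun t => Real.log (p₃.eval t / p₄.eval t))
        (((Polynomial.derivative p₃).eval x * p₄.eval x
          - p₃.eval x * (Polynomial.derivative p₄).eval x)
          / (p₃.eval x * p₄.eval x)) x := by
      have := (Real.hasDerivAt_log hratio).comp x hdiv
      refine this.congr_deriv ?_
      field_simp
    set u := Real.log (p₃.eval x / p₄.eval x)
    set du := ((Polynomial.derivative p₃).eval x * p₄.eval x
          - p₃.eval x * (Polynomial.derivative p₄).eval x)
          / (p₃.eval x * p₄.eval x)
    set dy := M (x, y x, u) / N (x, y x, u)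
    have hcurve : HasDerivAt (fun t => (t, y t, Real.log (p₃.eval t / p₄.eval t)))
        ((1 : ℝ), dy, du) x := HasDerivAt.prodMk (hasDerivAt_id x) (HasDerivAt.prodMk (hy x hx) hu)
    have hFd : HasDerivAt F (fderiv ℝ I (x, y x, u) (1, dy, du)) x :=
      (hI (x, y x, u)).hasFDerivAt.comp_hasDerivAt x hcurve
    have hsplit : fderiv ℝ I (x, y x, u) (1, dy, du)
        = pdX I (x, y x, u) + dy * pdY I (x, y x, u) + du * pdZ I (x, y x, u) := by
      have h1 : ((1 : ℝ), dy, du)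
          = ((1 : ℝ), (0 : ℝ), (0 : ℝ)) + dy • ((0 : ℝ), (1 : ℝ), (0 : ℝ))
            + du • ((0 : ℝ), (0 : ℝ), (1 : ℝ)) := by
        simp [Prod.ext_iff]
      rw [h1, map_add, map_add, map_smul, map_smul]
      simp [pdX, pdY, pdZ, smul_eq_mul]
    have hpde' := hpde x (y x) (hpos x hx) u rfl
    have hNx := hNne x hx
    have hzero : fderiv ℝ I (x, y x, u) (1, dy, du) = 0 := by
      rw [hsplit]
      have hPN : p₃.eval x * p₄.eval x ≠ 0 := hne x hx
      have hN' : N (x, y x, u) ≠ 0 := hNx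
      simp only [dy, du]
      field_simp
      linear_combination hpde'
    rw [hzero] at hFd
    exact hFd
  have hconv : Convex ℝ J := hJ.convex
  have hbound := hconv.norm_image_sub_le_of_norm_hasFDerivWithin_le
    (f := F) (f' := fun _ => (0 : ℝ →L[ℝ] ℝ)) (C := 0)
    (fun x hx => by
      have h := ((key x hx).hasFDerivAt).hasFDerivWithinAt (s := J)
      have e : ContinuousLinearMap.toSpanSingleton ℝ (0 : ℝ) = 0 := by
        ext; simp
      rwa [e] at h)
    (fun x _ => by simp) hb ha
  simp only [norm_zero, zero_mul] at hbound
  have : F a = F b := by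
    have := norm_sub_eq_zero_iff.mp (le_antisymm hbound (norm_nonneg _))
    exact this
  simpa [F] using this
end

section
/- Define I(x, y, u) = −(1/9)·(u·x − 10·x·ln(x+4) − 5·u − 40·ln(x+4) − 9·y − 36)/(x+4) on the open set {(x,y,u) ∈ ℝ³ : x > −4}. Then on this set (x+4)·(x−5)·∂I/∂x + (−x+y+u)·(x−5)·∂I/∂y + (x+4)·∂I/∂u = 0; that is, I is a first integral of the 3D system dx/dt = (x+4)(x−5), dy/dt = (−x+y+u)(x−5), du/dt = x+4. -/
/-- Partial derivative in the `u` (third) direction. -/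
noncomputable def pdU (F : ℝ × ℝ × ℝ → ℝ) (p : ℝ × ℝ × ℝ) : ℝ :=
  fderiv ℝ F p (0, 0, 1)

/-- The first integral `I(x,y,u) = −(1/9)·(u·x − 10·x·ln(x+4) − 5·u − 40·ln(x+4) − 9·y − 36)/(x+4)`,
with the point `p = (x, y, u)`. -/
noncomputable def Ifirst : ℝ × ℝ × ℝ → ℝ := fun p =>
  -(1 / 9) * (p.2.2 * p.1 - 10 * p.1 * Real.log (p.1 + 4) - 5 * p.2.2
      - 40 * Real.log (p.1 + 4) - 9 * p.2.1 - 36) / (p.1 + 4)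

/-- `Ifirst` is a first integral of the 3D system
`dx/dt = (x+4)(x−5)`, `dy/dt = (−x+y+u)(x−5)`, `du/dt = x+4` on `{x > −4}`. -/
theorem Ifirst_is_first_integral :
    ∀ p : ℝ × ℝ × ℝ, p.1 > -4 →
      (p.1 + 4) * (p.1 - 5) * pdX Ifirst p
        + (-p.1 + p.2.1 + p.2.2) * (p.1 - 5) * pdY Ifirst p
        + (p.1 + 4) * pdU Ifirst p = 0 := by
  intro p hp
  have hne : p.1 + 4 ≠ 0 := by intro h; linarith
  have hX : HasFDerivAt (fun q : ℝ × ℝ × ℝ => q.1)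
      (ContinuousLinearMap.fst ℝ ℝ (ℝ × ℝ)) p := hasFDerivAt_fst
  have hY : HasFDerivAt (fun q : ℝ × ℝ × ℝ => q.2.1)
      ((ContinuousLinearMap.fst ℝ ℝ ℝ).comp (ContinuousLinearMap.snd ℝ ℝ (ℝ × ℝ))) p :=
    hasFDerivAt_fst.comp p hasFDerivAt_snd
  have hU : HasFDerivAt (fun q : ℝ × ℝ × ℝ => q.2.2)
      ((ContinuousLinearMap.snd ℝ ℝ ℝ).comp (ContinuousLinearMap.snd ℝ ℝ (ℝ × ℝ))) p :=
    hasFDerivAt_snd.comp p hasFDerivAt_snd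
  have hx4 : HasFDerivAt (fun q : ℝ × ℝ × ℝ => q.1 + 4)
      (ContinuousLinearMap.fst ℝ ℝ (ℝ × ℝ)) p := hX.add_const 4
  have hlog : HasFDerivAt (fun q : ℝ × ℝ × ℝ => Real.log (q.1 + 4))
      ((p.1 + 4)⁻¹ • ContinuousLinearMap.fst ℝ ℝ (ℝ × ℝ)) p :=
    by have := (Real.hasDerivAt_log hne).comp_hasFDerivAt p hx4; exact this
  have hN := ((((hU.mul hX).sub ((hX.const_mul (10:ℝ)).mul hlog)).sub
      (hU.const_mul (5:ℝ))).sub (hlog.const_mul (40:ℝ))).sub (hY.const_mul (9:ℝ))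
  have hNum := (hN.sub_const (36:ℝ)).const_mul (-(1/9 : ℝ))
  have hinv : HasFDerivAt (fun q : ℝ × ℝ × ℝ => (q.1 + 4)⁻¹)
      ((-((p.1 + 4) ^ 2)⁻¹) • ContinuousLinearMap.fst ℝ ℝ (ℝ × ℝ)) p :=
    (hasDerivAt_inv hne).comp_hasFDerivAt p hx4
  have heq : Ifirst = fun q : ℝ × ℝ × ℝ =>
      (-(1 / 9) * (q.2.2 * q.1 - 10 * q.1 * Real.log (q.1 + 4) - 5 * q.2.2
        - 40 * Real.log (q.1 + 4) - 9 * q.2.1 - 36)) * (q.1 + 4)⁻¹ := by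
    funext q; simp [Ifirst, div_eq_mul_inv]
  have hfd := hNum.mul hinv
  change HasFDerivAt (fun q : ℝ × ℝ × ℝ =>
      (-(1 / 9) * (q.2.2 * q.1 - 10 * q.1 * Real.log (q.1 + 4) - 5 * q.2.2
        - 40 * Real.log (q.1 + 4) - 9 * q.2.1 - 36)) * (q.1 + 4)⁻¹) _ p at hfd
  rw [← heq] at hfd
  simp only [pdX, pdY, pdU, hfd.fderiv]
  simp only [ContinuousLinearMap.coe_smul', ContinuousLinearMap.coe_comp',
    ContinuousLinearMap.smul_apply, ContinuousLinearMap.add_apply,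
    ContinuousLinearMap.sub_apply, ContinuousLinearMap.coe_fst',
    ContinuousLinearMap.coe_snd', Function.comp_apply, Pi.smul_apply, smul_eq_mul, Pi.sub_apply, Pi.mul_apply]
  field_simp
  ring
end

section
/- Define I(x, y, z) = (y − z)·e^{−x}/z on the open set {(x,y,z) ∈ ℝ³ : z ≠ 0}. Then on this set f·∂I/∂x + g·∂I/∂y + h·∂I/∂z = 0, where f(x,y,z) = x·(2y² − x), g(x,y,z) = −x²·y + x²·z + y³ and h(x,y,z) = −z·(2xy − 2xz − y)·y; that is, I is a first integral of the 3D system dx/dt = f, dy/dt = g, dz/dt = h. -/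
/-- The first integral `I(x,y,z) = (y − z)·e^{−x}/z`, with the point `p = (x, y, z)`. -/
noncomputable def Iinv : ℝ × ℝ × ℝ → ℝ := fun p =>
  (p.2.1 - p.2.2) * Real.exp (-p.1) / p.2.2

/-- `Iinv` is a first integral of the 3D system
`dx/dt = x·(2y² − x)`, `dy/dt = −x²·y + x²·z + y³`, `dz/dt = −z·(2xy − 2xz − y)·y`
on `{z ≠ 0}`. -/
theorem Iinv_is_first_integral_exp_system :
    ∀ p : ℝ × ℝ × ℝ, p.2.2 ≠ 0 →
      p.1 * (2 * p.2.1 ^ 2 - p.1) * pdX Iinv p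
        + (-p.1 ^ 2 * p.2.1 + p.1 ^ 2 * p.2.2 + p.2.1 ^ 3) * pdY Iinv p
        + (-p.2.2 * (2 * p.1 * p.2.1 - 2 * p.1 * p.2.2 - p.2.1) * p.2.1) * pdZ Iinv p
        = 0 := by
  rintro ⟨x, y, z⟩ hz
  simp only at hz
  have hx : HasFDerivAt (fun q : ℝ × ℝ × ℝ => q.1)
      (ContinuousLinearMap.fst ℝ ℝ (ℝ × ℝ)) (x, y, z) := hasFDerivAt_fst
  have hy : HasFDerivAt (fun q : ℝ × ℝ × ℝ => q.2.1)
      ((ContinuousLinearMap.fst ℝ ℝ ℝ).comp (ContinuousLinearMap.snd ℝ ℝ (ℝ × ℝ))) (x, y, z) :=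
    hasFDerivAt_fst.comp _ hasFDerivAt_snd
  have hz' : HasFDerivAt (fun q : ℝ × ℝ × ℝ => q.2.2)
      ((ContinuousLinearMap.snd ℝ ℝ ℝ).comp (ContinuousLinearMap.snd ℝ ℝ (ℝ × ℝ))) (x, y, z) :=
    hasFDerivAt_snd.comp _ hasFDerivAt_snd
  have hexp : HasFDerivAt (fun q : ℝ × ℝ × ℝ => Real.exp (-q.1))
      (Real.exp (-x) • (-(ContinuousLinearMap.fst ℝ ℝ (ℝ × ℝ)))) (x, y, z) :=
    by have := HasDerivAt.comp_hasFDerivAt (x, y, z) (Real.hasDerivAt_exp (-x)) hx.neg; exact this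
  have hinv : HasFDerivAt (fun q : ℝ × ℝ × ℝ => (q.2.2)⁻¹)
      ((-(z ^ 2)⁻¹) • ((ContinuousLinearMap.snd ℝ ℝ ℝ).comp (ContinuousLinearMap.snd ℝ ℝ (ℝ × ℝ)))) (x, y, z) :=
    HasDerivAt.comp_hasFDerivAt (x, y, z) (hasDerivAt_inv hz) hz'
  have H := ((hy.sub hz').mul hexp).mul hinv
  have hIeq : Iinv = fun q : ℝ × ℝ × ℝ =>
      ((q.2.1 - q.2.2) * Real.exp (-q.1)) * (q.2.2)⁻¹ := by
    funext q; simp [Iinv, div_eq_mul_inv]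
  rw [show ((((fun q : ℝ × ℝ × ℝ => q.2.1) - fun q => q.2.2) * fun q => Real.exp (-q.1)) * fun q => q.2.2⁻¹) = Iinv from hIeq.symm] at H
  have hF := H.fderiv
  simp only [pdX, pdY, pdZ, hF]
  simp only [ContinuousLinearMap.add_apply, ContinuousLinearMap.smul_apply,
    ContinuousLinearMap.coe_comp', Function.comp_apply, ContinuousLinearMap.neg_apply,
    ContinuousLinearMap.coe_fst', ContinuousLinearMap.coe_snd', smul_eq_mul,
    Pi.mul_apply, Pi.sub_apply, Pi.neg_apply, ContinuousLinearMap.sub_apply]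
  field_simp
  ring
end

section
/- Let J ⊆ ℝ be an interval and y : J → ℝ be differentiable with x ≠ 0 and x ≠ 2·y(x)² for all x ∈ J, satisfying y'(x) = −(x²·e^{y(x)²/x} − x²·y(x) + y(x)³)/(x·(x − 2·y(x)²)) on J. Then the function x ↦ (y(x) − e^{y(x)²/x})·e^{−x}·e^{−y(x)²/x} is constant on J. -/
/-- Along any solution of the 1ODE
`y' = −(x²·e^{y²/x} − x²·y + y³)/(x·(x − 2y²))`, the quantity
`(y − e^{y²/x})·e^{−x}·e^{−y²/x}` is constant. -/
theorem invariant_constant_exp_1ode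
    (J : Set ℝ) (hJ : J.OrdConnected) (y : ℝ → ℝ)
    (hx0 : ∀ x ∈ J, x ≠ 0)
    (hx2 : ∀ x ∈ J, x ≠ 2 * (y x) ^ 2)
    (hy : ∀ x ∈ J,
      HasDerivAt y
        (-(x ^ 2 * Real.exp ((y x) ^ 2 / x) - x ^ 2 * y x + (y x) ^ 3)
          / (x * (x - 2 * (y x) ^ 2))) x) :
    ∀ a ∈ J, ∀ b ∈ J,
      (y a - Real.exp ((y a) ^ 2 / a)) * Real.exp (-a) * Real.exp (-((y a) ^ 2 / a))
        = (y b - Real.exp ((y b) ^ 2 / b)) * Real.exp (-b)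
            * Real.exp (-((y b) ^ 2 / b)) := by
  set F : ℝ → ℝ := fun t =>
    (y t - Real.exp ((y t) ^ 2 / t)) * Real.exp (-t) * Real.exp (-((y t) ^ 2 / t)) with hF
  have key : ∀ x ∈ J, HasDerivAt F 0 x := by
    intro x hx
    have hx0' : x ≠ 0 := hx0 x hx
    have hx2' : x - 2 * (y x) ^ 2 ≠ 0 :=
      sub_ne_zero.mpr (fun h => hx2 x hx (by linarith))
    set d : ℝ := -(x ^ 2 * Real.exp ((y x) ^ 2 / x) - x ^ 2 * y x + (y x) ^ 3)
        / (x * (x - 2 * (y x) ^ 2)) with hd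
    have hy' : HasDerivAt y d x := hy x hx
    have hsq : HasDerivAt (fun t => (y t) ^ 2) (2 * y x ^ 1 * d) x := by
      simpa using hy'.fun_pow 2
    have hu : HasDerivAt (fun t => (y t) ^ 2 / t)
        ((2 * y x ^ 1 * d * x - (y x) ^ 2 * 1) / x ^ 2) x :=
      hsq.div (hasDerivAt_id x) hx0'
    set u' : ℝ := (2 * y x ^ 1 * d * x - (y x) ^ 2 * 1) / x ^ 2 with hu'def
    have heu : HasDerivAt (fun t => Real.exp ((y t) ^ 2 / t))
        (Real.exp ((y x) ^ 2 / x) * u') x := hu.exp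
    have hneu : HasDerivAt (fun t => Real.exp (-((y t) ^ 2 / t)))
        (Real.exp (-((y x) ^ 2 / x)) * (-u')) x := hu.neg.exp
    have hex : HasDerivAt (fun t : ℝ => Real.exp (-t)) (Real.exp (-x) * (-1)) x :=
      (hasDerivAt_id x).neg.exp
    have hcomb := ((hy'.sub heu).mul hex).mul hneu
    have h1 : d * (x * (x - 2 * (y x) ^ 2))
        = -(x ^ 2 * Real.exp ((y x) ^ 2 / x) - x ^ 2 * y x + (y x) ^ 3) := by
      rw [hd]; exact div_mul_cancel₀ _ (mul_ne_zero hx0' hx2')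
    have h2 : u' * x ^ 2 = 2 * y x ^ 1 * d * x - (y x) ^ 2 * 1 := by
      rw [hu'def]; field_simp
    have hP : (d - y x + Real.exp ((y x) ^ 2 / x) - y x * u')
        * (x ^ 2 * (x - 2 * (y x) ^ 2)) = 0 := by
      linear_combination (x - 2 * (y x) ^ 2) * h1 - (y x) * (x - 2 * (y x) ^ 2) * h2
    have key0 : d - y x + Real.exp ((y x) ^ 2 / x) - y x * u' = 0 := by
      rcases mul_eq_zero.mp hP with h | h
      · exact h
      · exact absurd h (mul_ne_zero (pow_ne_zero 2 hx0') hx2')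
    refine hcomb.congr_deriv ?_
    simp only [Pi.sub_apply, Pi.mul_apply]
    linear_combination (Real.exp (-x) * Real.exp (-((y x) ^ 2 / x))) * key0
  intro a ha b hb
  have main : ∀ a ∈ J, ∀ b ∈ J, a ≤ b → F a = F b := by
    intro a ha b hb hab
    have hsub : Set.Icc a b ⊆ J := hJ.out ha hb
    have hcont : ContinuousOn F (Set.Icc a b) := fun x hx =>
      (key x (hsub hx)).continuousAt.continuousWithinAt
    have hderiv : ∀ x ∈ Set.Ico a b, HasDerivWithinAt F 0 (Set.Ici x) x := fun x hx =>
      (key x (hsub ⟨hx.1, le_of_lt hx.2⟩)).hasDerivWithinAt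
    exact (constant_of_has_deriv_right_zero hcont hderiv b
      ⟨hab, le_refl b⟩).symm
  rcases le_total a b with h | h
  · exact main a ha b hb h
  · exact (main b hb a ha h).symm
end

section
/- Let f(x,y,z) = x·(2y² − x), g(x,y,z) = −x²·y + x²·z + y³, h(x,y,z) = −z·(2xy − 2xz − y)·y and S(x,y,z) = −z/y. Then at every point of ℝ³ with y ≠ 0 and x·(2y² − x) ≠ 0: f·∂S/∂x + g·∂S/∂y + h·∂S/∂z = S²·(f·∂g/∂z − g·∂f/∂z)/f + S·(g·∂f/∂y + f·∂h/∂z − f·∂g/∂y − h·∂f/∂z)/f − (f·∂h/∂y − h·∂f/∂y)/f. -/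
/-- `f(x,y,z) = x·(2y² − x)`, with `p = (x, y, z)`. -/
def fS : ℝ × ℝ × ℝ → ℝ := fun p => p.1 * (2 * p.2.1 ^ 2 - p.1)

/-- `g(x,y,z) = −x²·y + x²·z + y³`. -/
def gS : ℝ × ℝ × ℝ → ℝ := fun p => -p.1 ^ 2 * p.2.1 + p.1 ^ 2 * p.2.2 + p.2.1 ^ 3

/-- `h(x,y,z) = −z·(2xy − 2xz − y)·y`. -/
def hS : ℝ × ℝ × ℝ → ℝ := fun p =>
  -p.2.2 * (2 * p.1 * p.2.1 - 2 * p.1 * p.2.2 - p.2.1) * p.2.1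

/-- The S-function `S(x,y,z) = −z/y`. -/
noncomputable def SS : ℝ × ℝ × ℝ → ℝ := fun p => -p.2.2 / p.2.1

section aux

lemma hasX (p : ℝ × ℝ × ℝ) :
    HasFDerivAt (fun q : ℝ × ℝ × ℝ => q.1)
      (ContinuousLinearMap.fst ℝ ℝ (ℝ × ℝ)) p := hasFDerivAt_fst

lemma hasY (p : ℝ × ℝ × ℝ) :
    HasFDerivAt (fun q : ℝ × ℝ × ℝ => q.2.1)
      ((ContinuousLinearMap.fst ℝ ℝ ℝ).comp (ContinuousLinearMap.snd ℝ ℝ (ℝ × ℝ))) p :=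
  hasFDerivAt_fst.comp p hasFDerivAt_snd

lemma hasZ (p : ℝ × ℝ × ℝ) :
    HasFDerivAt (fun q : ℝ × ℝ × ℝ => q.2.2)
      ((ContinuousLinearMap.snd ℝ ℝ ℝ).comp (ContinuousLinearMap.snd ℝ ℝ (ℝ × ℝ))) p :=
  hasFDerivAt_snd.comp p hasFDerivAt_snd

lemma fS_eq : fS = fun q : ℝ × ℝ × ℝ => q.1 * (2 * (q.2.1 * q.2.1) - q.1) := by
  funext q; simp only [fS]; ring

lemma gS_eq : gS = fun q : ℝ × ℝ × ℝ =>
    -(q.1 * q.1) * q.2.1 + (q.1 * q.1) * q.2.2 + q.2.1 * (q.2.1 * q.2.1) := by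
  funext q; simp only [gS]; ring

lemma SS_eq : SS = fun q : ℝ × ℝ × ℝ => -q.2.2 * (q.2.1)⁻¹ := by
  funext q; simp only [SS]; ring

lemma pd_fS (p : ℝ × ℝ × ℝ) :
    pdY fS p = 4 * p.1 * p.2.1 ∧ pdZ fS p = 0 := by
  have H := ((hasX p).mul ((((hasY p).mul (hasY p)).const_mul 2).sub (hasX p))).fderiv
  rw [fS_eq]
  refine ⟨?_, ?_⟩ <;>
  · simp only [pdY, pdZ]
    rw [show fderiv ℝ (fun q : ℝ × ℝ × ℝ => q.1 * (2 * (q.2.1 * q.2.1) - q.1)) p = _ from H]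
    simp
    try ring

lemma pd_gS (p : ℝ × ℝ × ℝ) :
    pdY gS p = -p.1 ^ 2 + 3 * p.2.1 ^ 2 ∧ pdZ gS p = p.1 ^ 2 := by
  have H := (((((hasX p).mul (hasX p)).neg).mul (hasY p)).add
      (((hasX p).mul (hasX p)).mul (hasZ p))).add ((hasY p).mul ((hasY p).mul (hasY p)))
  rw [gS_eq]
  refine ⟨?_, ?_⟩ <;>
  · simp only [pdY, pdZ]
    rw [show fderiv ℝ (fun q : ℝ × ℝ × ℝ =>
      -(q.1 * q.1) * q.2.1 + (q.1 * q.1) * q.2.2 + q.2.1 * (q.2.1 * q.2.1)) p = _ from H.fderiv]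
    simp
    try ring

lemma pd_hS (p : ℝ × ℝ × ℝ) :
    pdY hS p = -p.2.2 * (2 * p.1 * p.2.1 - 2 * p.1 * p.2.2 - p.2.1)
        - p.2.2 * p.2.1 * (2 * p.1 - 1) ∧
      pdZ hS p = -p.2.1 * (2 * p.1 * p.2.1 - 2 * p.1 * p.2.2 - p.2.1)
        + 2 * p.1 * p.2.1 * p.2.2 := by
  have H := ((((hasZ p).neg).mul (((((hasX p).const_mul 2).mul (hasY p)).sub
      (((hasX p).const_mul 2).mul (hasZ p))).sub (hasY p))).mul (hasY p))
  refine ⟨?_, ?_⟩ <;>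
  · simp only [pdY, pdZ]
    rw [show fderiv ℝ hS p = _ from H.fderiv]
    simp
    try ring

lemma pd_SS (p : ℝ × ℝ × ℝ) (hy : p.2.1 ≠ 0) :
    pdX SS p = 0 ∧ pdY SS p = p.2.2 / p.2.1 ^ 2 ∧ pdZ SS p = -1 / p.2.1 := by
  have Hinv : HasFDerivAt (fun q : ℝ × ℝ × ℝ => (q.2.1)⁻¹)
      (((1 : ℝ →L[ℝ] ℝ).smulRight (-(p.2.1 ^ 2)⁻¹)).comp
        ((ContinuousLinearMap.fst ℝ ℝ ℝ).comp (ContinuousLinearMap.snd ℝ ℝ (ℝ × ℝ)))) p :=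
    (hasFDerivAt_inv hy).comp p (hasY p)
  have H := ((hasZ p).neg).mul Hinv
  rw [SS_eq]
  refine ⟨?_, ?_, ?_⟩ <;>
  · simp only [pdX, pdY, pdZ]
    rw [show fderiv ℝ (fun q : ℝ × ℝ × ℝ => -q.2.2 * (q.2.1)⁻¹) p = _ from H.fderiv]
    simp
    try field_simp
    try ring

end aux

/-- The S-function `S = −z/y` satisfies the Riccati-type equation
`D[S] = S²·(f·g_z − g·f_z)/f + S·(g·f_y + f·h_z − f·g_y − h·f_z)/f − (f·h_y − h·f_y)/f`
at every point with `y ≠ 0` and `x·(2y² − x) ≠ 0`. -/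
theorem S_function_riccati_explicit :
    ∀ p : ℝ × ℝ × ℝ, p.2.1 ≠ 0 → p.1 * (2 * p.2.1 ^ 2 - p.1) ≠ 0 →
      fS p * pdX SS p + gS p * pdY SS p + hS p * pdZ SS p =
        (SS p) ^ 2 * (fS p * pdZ gS p - gS p * pdZ fS p) / fS p
          + SS p * (gS p * pdY fS p + fS p * pdZ hS p - fS p * pdY gS p
              - hS p * pdZ fS p) / fS p
          - (fS p * pdY hS p - hS p * pdY fS p) / fS p := by
  intro p hy hf
  obtain ⟨e2, e3⟩ := pd_fS p
  obtain ⟨e4, e5⟩ := pd_gS p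
  obtain ⟨e6, e7⟩ := pd_hS p
  obtain ⟨e8, e9, e10⟩ := pd_SS p hy
  have hfS : fS p ≠ 0 := hf
  rw [e2, e3, e4, e5, e6, e7, e8, e9, e10]
  simp only [fS, gS, hS, SS] at *
  have h1 : p.1 ≠ 0 := left_ne_zero_of_mul hf
  have h2 : 2 * p.2.1 ^ 2 - p.1 ≠ 0 := right_ne_zero_of_mul hf
  field_simp
  ring
end

section
/- Define I(x, y, z) = (y − z)·e^{−x}/z on the open set {(x,y,z) ∈ ℝ³ : z ≠ 0}. Then on this set f·∂I/∂x + g·∂I/∂y + h·∂I/∂z = 0, where f(x,y,z) = x·y·z − x·y − z, g(x,y,z) = x·y²·z − x·y·z² + y² − y·z + z² and h(x,y,z) = (x·y − x·z + y)·z; that is, I is a first integral of the 3D system dx/dt = f, dy/dt = g, dz/dt = h. -/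
/-- `Iinv` is a first integral of the 3D system
`dx/dt = x·y·z − x·y − z`, `dy/dt = x·y²·z − x·y·z² + y² − y·z + z²`,
`dz/dt = (x·y − x·z + y)·z` on `{z ≠ 0}`. -/
theorem Iinv_is_first_integral_log_system :
    ∀ p : ℝ × ℝ × ℝ, p.2.2 ≠ 0 →
      (p.1 * p.2.1 * p.2.2 - p.1 * p.2.1 - p.2.2) * pdX Iinv p
        + (p.1 * p.2.1 ^ 2 * p.2.2 - p.1 * p.2.1 * p.2.2 ^ 2 + p.2.1 ^ 2
            - p.2.1 * p.2.2 + p.2.2 ^ 2) * pdY Iinv p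
        + ((p.1 * p.2.1 - p.1 * p.2.2 + p.2.1) * p.2.2) * pdZ Iinv p = 0 := by
  intro p hz
  obtain ⟨x, y, z⟩ := p
  simp only [Prod.fst, Prod.snd] at hz ⊢
  have hy : HasFDerivAt (fun q : ℝ × ℝ × ℝ => q.2.1)
      ((ContinuousLinearMap.fst ℝ ℝ ℝ).comp (ContinuousLinearMap.snd ℝ ℝ (ℝ × ℝ)))
      (x, y, z) := hasFDerivAt_fst.comp _ hasFDerivAt_snd
  have hzd : HasFDerivAt (fun q : ℝ × ℝ × ℝ => q.2.2)
      ((ContinuousLinearMap.snd ℝ ℝ ℝ).comp (ContinuousLinearMap.snd ℝ ℝ (ℝ × ℝ)))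
      (x, y, z) := hasFDerivAt_snd.comp _ hasFDerivAt_snd
  have hexp : HasFDerivAt (fun q : ℝ × ℝ × ℝ => Real.exp (-q.1))
      (Real.exp (-x) • (-(ContinuousLinearMap.fst ℝ ℝ (ℝ × ℝ)))) (x, y, z) :=
    (hasFDerivAt_fst (𝕜 := ℝ) (p := ((x, y, z) : ℝ × ℝ × ℝ))).neg.exp
  have hinv : HasFDerivAt (fun q : ℝ × ℝ × ℝ => (q.2.2)⁻¹)
      ((-(z ^ 2)⁻¹) • ((ContinuousLinearMap.snd ℝ ℝ ℝ).comp (ContinuousLinearMap.snd ℝ ℝ (ℝ × ℝ))))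
      (x, y, z) := HasDerivAt.comp_hasFDerivAt _ (hasDerivAt_inv hz) hzd
  have hIeq : Iinv = fun q : ℝ × ℝ × ℝ => ((q.2.1 - q.2.2) * Real.exp (-q.1)) * (q.2.2)⁻¹ := by
    funext q; simp [Iinv, div_eq_mul_inv]
  have hI : HasFDerivAt Iinv _ (x, y, z) := hIeq ▸ (show HasFDerivAt (fun q : ℝ × ℝ × ℝ => ((q.2.1 - q.2.2) * Real.exp (-q.1)) * (q.2.2)⁻¹) _ (x, y, z) from ((hy.sub hzd).mul hexp).mul hinv)
  have hfd := hI.fderiv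
  simp only [pdX, pdY, pdZ, hfd]
  simp only [ContinuousLinearMap.smul_apply, ContinuousLinearMap.sub_apply,
    ContinuousLinearMap.add_apply, ContinuousLinearMap.comp_apply,
    ContinuousLinearMap.smulRight_apply, ContinuousLinearMap.neg_apply,
    ContinuousLinearMap.coe_fst', ContinuousLinearMap.coe_snd', smul_eq_mul, Pi.sub_apply, Pi.mul_apply]
  field_simp
  ring
end

section
/- Let J ⊆ ℝ be an interval and y : J → ℝ be differentiable such that for all x ∈ J: x ≠ 0, y(x) ≠ 0, cos((x − y(x))/(x·y(x))) ≠ 0, and y'(x) = ((tan((x−y(x))/(x·y(x))))² − x·tan((x−y(x))/(x·y(x))) + x·y(x) + 1)·y(x)²/(x²·((tan((x−y(x))/(x·y(x))))² + y(x)² + 1)). Then the function x ↦ (y(x) − tan((x − y(x))/(x·y(x))))/x is constant on J. -/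
set_option maxHeartbeats 1000000

/-- Along any solution of the 1ODE
`y' = ((tan((x−y)/(xy)))² − x·tan((x−y)/(xy)) + x·y + 1)·y²
      /(x²·((tan((x−y)/(xy)))² + y² + 1))`,
the quantity `(y − tan((x−y)/(xy)))/x` is constant. -/
theorem invariant_constant_trig_1ode
    (J : Set ℝ) (hJ : J.OrdConnected) (y : ℝ → ℝ)
    (hx0 : ∀ x ∈ J, x ≠ 0)
    (hy0 : ∀ x ∈ J, y x ≠ 0)
    (hcos : ∀ x ∈ J, Real.cos ((x - y x) / (x * y x)) ≠ 0)
    (hy : ∀ x ∈ J,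
      HasDerivAt y
        (((Real.tan ((x - y x) / (x * y x))) ^ 2
            - x * Real.tan ((x - y x) / (x * y x)) + x * y x + 1) * (y x) ^ 2
          / (x ^ 2 * ((Real.tan ((x - y x) / (x * y x))) ^ 2 + (y x) ^ 2 + 1))) x) :
    ∀ a ∈ J, ∀ b ∈ J,
      (y a - Real.tan ((a - y a) / (a * y a))) / a
        = (y b - Real.tan ((b - y b) / (b * y b))) / b := by
  intro a ha b hb
  have key : ∀ x ∈ J,
      HasDerivAt (fun x => (y x - Real.tan ((x - y x) / (x * y x))) / x) 0 x := by
    intro x hx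
    have hx0' := hx0 x hx
    have hy0' := hy0 x hx
    have hc := hcos x hx
    have hyd := hy x hx
    have hxy : x * y x ≠ 0 := mul_ne_zero hx0' hy0'
    obtain ⟨T, hT⟩ : ∃ t, Real.tan ((x - y x) / (x * y x)) = t := ⟨_, rfl⟩
    rw [hT] at hyd
    obtain ⟨d, hd⟩ : ∃ d,
        (T ^ 2 - x * T + x * y x + 1) * (y x) ^ 2
          / (x ^ 2 * (T ^ 2 + (y x) ^ 2 + 1)) = d := ⟨_, rfl⟩
    rw [hd] at hyd
    have ht : HasDerivAt (fun z => (z - y z) / (z * y z))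
        (((1 - d) * (x * y x) - (x - y x) * (1 * y x + x * d)) / (x * y x) ^ 2) x :=
      ((hasDerivAt_id x).sub hyd).div ((hasDerivAt_id x).mul hyd) hxy
    have htan : HasDerivAt (fun z => Real.tan ((z - y z) / (z * y z)))
        (1 / Real.cos ((x - y x) / (x * y x)) ^ 2 *
          (((1 - d) * (x * y x) - (x - y x) * (1 * y x + x * d)) / (x * y x) ^ 2)) x :=
      HasDerivAt.comp (h₂ := Real.tan) x (Real.hasDerivAt_tan hc) ht
    have hFd := (hyd.sub htan).div (hasDerivAt_id x) hx0'
    simp only [Pi.sub_apply, Pi.div_apply, id] at hFd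
    rw [hT] at hFd
    replace hFd : HasDerivAt (fun x => (y x - Real.tan ((x - y x) / (x * y x))) / x) _ x := hFd
    convert hFd using 1
    have hsec : 1 / Real.cos ((x - y x) / (x * y x)) ^ 2 = T ^ 2 + 1 := by
      rw [← hT, Real.tan_eq_sin_div_cos, div_pow]
      field_simp
      exact (Real.sin_sq_add_cos_sq _).symm
    rw [hsec, ← hd]
    have hden : T ^ 2 + (y x) ^ 2 + 1 ≠ 0 := by positivity
    field_simp
    ring
  have hconv : Convex ℝ J := convex_iff_ordConnected.mpr hJ
  have h0 : ‖(y b - Real.tan ((b - y b) / (b * y b))) / b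
      - (y a - Real.tan ((a - y a) / (a * y a))) / a‖ ≤ 0 * ‖b - a‖ := by
    apply hconv.norm_image_sub_le_of_norm_hasFDerivWithin_le
      (f' := fun _ => (0 : ℝ →L[ℝ] ℝ)) (fun z hz => ?_) (fun z hz => by simp) ha hb
    have h := ((key z hz).hasFDerivAt).hasFDerivWithinAt (s := J)
    have e : (ContinuousLinearMap.toSpanSingleton ℝ (0 : ℝ)) = 0 := by
      ext; simp
    rwa [e] at h
  have := norm_sub_eq_zero_iff.mp (le_antisymm (by simpa using h0) (norm_nonneg _))
  linarith [this]
end
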